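/- Define V : ℝ → ℝ by V(θ) = −80·(2421541645 − 515181045616·θ(1−θ)) / (13⁹·(901 − 443072·θ(1−θ))). Then the denominator 901 − 443072·θ(1−θ) is nonzero for all θ ∈ [49/100, 1/2], V is strictly decreasing on [49/100, 1/2], and V(1/2) = −16655514960/(181·13⁹). -/
import Mathlib


/-- The value of the correlated cooperative game on the final θ-interval. -/
noncomputable def valueFn (θ : ℝ) : ℝ :=
  -80 * (2421541645 - 515181045616 * (θ * (1 - θ)))
    / (13 ^ 9 * (901 - 443072 * (θ * (1 - θ))))

lemma den_neg {θ : ℝ} (h1 : (49/100 : ℝ) ≤ θ) (h2 : θ ≤ 1/2) :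
    (901 : ℝ) - 443072 * (θ * (1 - θ)) < 0 := by
  nlinarith [mul_nonneg (by linarith : (0:ℝ) ≤ θ - 49/100) (by linarith : (0:ℝ) ≤ 1/2 - θ)]

/-- On `[49/100, 1/2]` the denominator is nonzero, `V` is strictly decreasing,
and `V(1/2) = −16655514960/(181·13⁹)`. -/
theorem valueFn_strictAnti :
    (∀ θ ∈ Set.Icc (49 / 100 : ℝ) (1 / 2),
        (901 : ℝ) - 443072 * (θ * (1 - θ)) ≠ 0) ∧
      StrictAntiOn valueFn (Set.Icc (49 / 100 : ℝ) (1 / 2)) ∧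
      valueFn (1 / 2) = -16655514960 / (181 * 13 ^ 9) := by
  refine ⟨fun θ hθ => ne_of_lt (den_neg hθ.1 hθ.2), ?_, ?_⟩
  · intro a ha b hb hab
    have da := den_neg ha.1 ha.2
    have db := den_neg hb.1 hb.2
    have Da : (13:ℝ) ^ 9 * (901 - 443072 * (a * (1 - a))) < 0 := by
      have : (0:ℝ) < 13 ^ 9 := by positivity
      nlinarith
    have Db : (13:ℝ) ^ 9 * (901 - 443072 * (b * (1 - b))) < 0 := by
      have : (0:ℝ) < 13 ^ 9 := by positivity
      nlinarith
    have hts : a * (1 - a) < b * (1 - b) := by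
      nlinarith [ha.1, hb.2, hab]
    show valueFn b < valueFn a
    unfold valueFn
    rw [← neg_div_neg_eq (-80 * (2421541645 - 515181045616 * (b * (1 - b)))),
        ← neg_div_neg_eq (-80 * (2421541645 - 515181045616 * (a * (1 - a)))),
        div_lt_div_iff₀ (by linarith) (by linarith)]
    nlinarith [hts]
  · unfold valueFn
    norm_num
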